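/- Let P and Q be probability measures on a measurable space with P ≪ Q, and let f : 𝒳 → ℝ be measurable with 0 < E_Q[e^{f(X)}] < ∞. Then E_P[f(X)] − log E_Q[e^{f(X)}] ≤ D_KL(P ‖ Q). Moreover, if D_KL(P ‖ Q) < ∞ and f = log(dP/dQ) + c for a constant c (on the support of P), equality holds. -/
import Mathlib


open MeasureTheory

/-- Donsker–Varadhan lower bound and attainment: Let `P, Q` be probability
measures with `P ≪ Q`, and `f` measurable with `0 < E_Q[e^f] < ∞` (here encoded via
integrability of `e^f` under `Q` and positivity of the integral; we also assume `f` and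
`log (dP/dQ)` are `P`-integrable so that all expectations are well defined).  With
`D = D_KL(P‖Q) = E_P[log (dP/dQ)]`, we have `E_P[f] - log E_Q[e^f] ≤ D`.  Moreover, if
`f = log (dP/dQ) + c` for a constant `c` on the support of `P` (formalized by requiring
`dP/dQ > 0` `Q`-a.e., i.e. the support is everything, and `f = log(dP/dQ) + c` a.e.),
equality holds. -/
theorem stmt_7 {𝒳 : Type*} [MeasurableSpace 𝒳]
    (P Q : Measure 𝒳) [IsProbabilityMeasure P] [IsProbabilityMeasure Q]
    (hac : P ≪ Q)
    (f : 𝒳 → ℝ) (hfmeas : Measurable f)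
    (hfint : Integrable f P)
    (hexp : Integrable (fun x => Real.exp (f x)) Q)
    (hpos : 0 < ∫ x, Real.exp (f x) ∂Q)
    (D : ℝ)
    (hD : D = ∫ x, Real.log ((P.rnDeriv Q x).toReal) ∂P)
    (hlogint : Integrable (fun x => Real.log ((P.rnDeriv Q x).toReal)) P) :
    ((∫ x, f x ∂P) - Real.log (∫ x, Real.exp (f x) ∂Q) ≤ D) ∧
    (∀ c : ℝ, (∀ᵐ x ∂Q, 0 < P.rnDeriv Q x) →
      (∀ᵐ x ∂Q, f x = Real.log ((P.rnDeriv Q x).toReal) + c) →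
      (∫ x, f x ∂P) - Real.log (∫ x, Real.exp (f x) ∂Q) = D) := by
  set g : 𝒳 → ℝ := fun x => Real.log ((P.rnDeriv Q x).toReal) with hg
  set h : 𝒳 → ℝ := fun x => Real.exp (f x - g x) with hh
  have hrmeas : Measurable fun x => (P.rnDeriv Q x).toReal :=
    (Measure.measurable_rnDeriv P Q).ennreal_toReal
  have hhmeas : Measurable h := ((hfmeas.sub (hrmeas.log)).exp)
  -- pointwise bound : r • h ≤ exp f
  have hbound : ∀ x, (P.rnDeriv Q x).toReal • h x ≤ Real.exp (f x) := by
    intro x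
    rcases eq_or_lt_of_le (ENNReal.toReal_nonneg (a := P.rnDeriv Q x)) with h0 | h0
    · simp [← h0]
      positivity
    · have : h x = Real.exp (f x) / (P.rnDeriv Q x).toReal := by
        have h1 : h x = Real.exp (f x) / Real.exp (Real.log ((P.rnDeriv Q x).toReal)) :=
          Real.exp_sub _ _
        rw [h1, Real.exp_log h0]
      rw [this, smul_eq_mul, mul_div_cancel₀ _ (ne_of_gt h0)]
  have hnn : ∀ x, 0 ≤ (P.rnDeriv Q x).toReal • h x := fun x => by
    have : 0 ≤ h x := (Real.exp_pos _).le
    positivity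
  -- integrability of r • h under Q
  have hQint : Integrable (fun x => (P.rnDeriv Q x).toReal • h x) Q := by
    refine hexp.mono ((hrmeas.smul hhmeas).aestronglyMeasurable) ?_
    filter_upwards with x
    rw [Real.norm_eq_abs, Real.norm_eq_abs, abs_of_nonneg (hnn x),
      abs_of_nonneg (Real.exp_pos _).le]
    exact hbound x
  have hPint : Integrable h P := (integrable_rnDeriv_smul_iff hac).mp hQint
  have hint_eq : ∫ x, h x ∂P = ∫ x, (P.rnDeriv Q x).toReal • h x ∂Q :=
    (integral_rnDeriv_smul hac).symm
  have hle : ∫ x, h x ∂P ≤ ∫ x, Real.exp (f x) ∂Q := by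
    rw [hint_eq]
    exact integral_mono hQint hexp hbound
  -- Jensen
  have hjensen : Real.exp (∫ x, f x - g x ∂P) ≤ ∫ x, h x ∂P := by
    have := convexOn_exp.map_integral_le (μ := P) (f := fun x => f x - g x)
      Real.continuous_exp.continuousOn isClosed_univ
      (Filter.Eventually.of_forall fun x => Set.mem_univ _) (hfint.sub hlogint) ?_
    · exact this
    · exact hPint
  have hsub : ∫ x, f x - g x ∂P = (∫ x, f x ∂P) - ∫ x, g x ∂P :=
    integral_sub hfint hlogint
  have hmain : (∫ x, f x ∂P) - Real.log (∫ x, Real.exp (f x) ∂Q) ≤ D := by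
    have hexp_le : Real.exp ((∫ x, f x ∂P) - D) ≤ ∫ x, Real.exp (f x) ∂Q := by
      calc Real.exp ((∫ x, f x ∂P) - D) = Real.exp (∫ x, f x - g x ∂P) := by
            rw [hsub, hD]
        _ ≤ ∫ x, h x ∂P := hjensen
        _ ≤ _ := hle
    have := (Real.le_log_iff_exp_le hpos).mpr hexp_le
    linarith
  refine ⟨hmain, fun c hrpos heq => ?_⟩
  -- equality case
  have hlt : ∀ᵐ x ∂Q, P.rnDeriv Q x < ⊤ := Measure.rnDeriv_lt_top P Q
  have hint2 : ∫ x, Real.exp (f x) ∂Q = Real.exp c := by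
    have hae : (fun x => Real.exp (f x)) =ᵐ[Q]
        fun x => (P.rnDeriv Q x).toReal * Real.exp c := by
      filter_upwards [hrpos, heq, hlt] with x hx1 hx2 hx3
      have hr0 : 0 < (P.rnDeriv Q x).toReal := ENNReal.toReal_pos hx1.ne' hx3.ne
      rw [hx2, Real.exp_add, Real.exp_log hr0]
    rw [integral_congr_ae hae, integral_mul_const,
      Measure.integral_toReal_rnDeriv hac]
    simp
  have hfP : ∫ x, f x ∂P = D + c := by
    have hae : f =ᵐ[P] fun x => g x + c := hac.ae_le heq
    rw [integral_congr_ae hae, integral_add hlogint (integrable_const c), ← hD,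
      integral_const]
    simp
  rw [hint2, Real.log_exp, hfP]
  ring
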